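/- arXiv:2109.14232 — 5 statements merged into one kernel-verified Lean document; each statement's English description precedes it below -/
import Mathlib

section
/- For complex variables z_1,…,z_m such that no partial product ∏_{j=i}^m z_{σ_j} equals 1 and all z_i are pairwise distinct, the antisymmetrized sum ∑_{σ∈S_m} sgn(σ) ∏_{i=1}^m [ z_{σ_i}^{i-1} (1-z_{σ_i})^{m-i+1} / (1 - ∏_{j=i}^m z_{σ_j}) ] equals the Vandermonde product ∏_{1≤i<j≤m} (z_j - z_i). -/
open scoped BigOperators

open Finset Polynomial

section helpers

lemma ici_zero (n : ℕ) : Finset.Ici (0 : Fin (n+1)) = Finset.univ := by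
  ext j; simp [Fin.zero_le]

lemma ici_succ {n : ℕ} (i : Fin n) :
    Finset.Ici i.succ = (Finset.Ici i).map (Fin.succEmb n) := by
  ext j
  cases j using Fin.cases with
  | zero =>
    refine iff_of_false ?_ ?_
    · intro h
      rw [Finset.mem_Ici] at h
      exact Fin.succ_ne_zero i (Fin.le_antisymm h (Fin.zero_le _))
    · intro h
      rw [Finset.mem_map] at h
      obtain ⟨a, -, ha⟩ := h
      exact Fin.succ_ne_zero a ha
  | succ k => simp [Fin.succ_le_succ_iff]

lemma map_swap_succ {n : ℕ} (p : Fin (n+1)) :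
    (Finset.univ.map ((Fin.succEmb n).trans (Equiv.swap 0 p).toEmbedding))
      = Finset.univ.erase p := by
  ext j
  simp only [Finset.mem_map, Finset.mem_univ, true_and, Function.Embedding.trans_apply,
    Equiv.coe_toEmbedding, Fin.succEmb, Function.Embedding.coeFn_mk, Finset.mem_erase,
    and_true]
  constructor
  · rintro ⟨k, rfl⟩
    intro h
    have := (Equiv.swap 0 p).injective (h.trans (Equiv.swap_apply_left 0 p).symm)
    exact Fin.succ_ne_zero k this
  · intro hj
    have h0 : Equiv.swap 0 p j ≠ 0 := by
      intro h
      apply hj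
      exact (Equiv.swap 0 p).injective (h.trans (Equiv.swap_apply_right 0 p).symm)
    refine ⟨(Equiv.swap 0 p j).pred h0, ?_⟩
    rw [Fin.succ_pred]
    exact Equiv.swap_apply_self 0 p j

lemma prod_swap_succ {n : ℕ} (p : Fin (n+1)) (F : Fin (n+1) → ℂ) :
    (∏ j : Fin n, F (Equiv.swap 0 p j.succ)) = ∏ j ∈ Finset.univ.erase p, F j := by
  rw [← map_swap_succ p, Finset.prod_map]
  rfl

lemma vandermonde_perm {m : ℕ} (c : Equiv.Perm (Fin m)) (z : Fin m → ℂ) :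
    (∏ i : Fin m, ∏ j ∈ Finset.Ioi i, (z (c j) - z (c i)))
      = ((Equiv.Perm.sign c : ℤ) : ℂ) * ∏ i : Fin m, ∏ j ∈ Finset.Ioi i, (z j - z i) := by
  have h1 : Matrix.vandermonde (z ∘ c) = fun i j => Matrix.vandermonde z (c i) j := by
    funext i j; rfl
  have h2 := Matrix.det_permute c (Matrix.vandermonde z)
  have h3 : (Matrix.vandermonde (z ∘ c)).det = Matrix.det (fun i j => Matrix.vandermonde z (c i) j) := by
    rw [h1]
  have h4 : Matrix.det (fun i j => Matrix.vandermonde z (c i) j)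
      = ((Matrix.vandermonde z).submatrix (⇑c) id).det := rfl
  rw [Matrix.det_vandermonde, h4, h2, Matrix.det_vandermonde] at h3
  simpa using h3

lemma pair_split {n : ℕ} (w : Fin (n+1) → ℂ) :
    (∏ i : Fin (n+1), ∏ j ∈ Finset.Ioi i, (w j - w i))
      = (∏ j : Fin n, (w j.succ - w 0)) *
        ∏ i : Fin n, ∏ j ∈ Finset.Ioi i, (w j.succ - w i.succ) := by
  rw [Fin.prod_univ_succ, Fin.prod_Ioi_zero]
  congr 1
  refine Finset.prod_congr rfl fun i _ => ?_
  rw [Fin.prod_Ioi_succ]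

lemma lagrange_key (m : ℕ) (z : Fin m → ℂ) (hinj : Function.Injective z) :
    (∑ p : Fin m, (1 - z p) ^ m * ∏ j ∈ Finset.univ.erase p, (z j * (z j - z p)⁻¹))
      = 1 - ∏ j, z j := by
  classical
  set q : ℂ[X] := (X - C 1) ^ m - Lagrange.nodal Finset.univ z with hq
  set f : ℂ[X] := C ((-1 : ℂ) ^ m) * q with hf
  have hcard : (Finset.univ : Finset (Fin m)).card = m := by simp
  have hdegq : q.degree < (m : WithBot ℕ) := by
    have h1 : ((X - C (1:ℂ)) ^ m).degree = (m : WithBot ℕ) := by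
      rw [degree_pow, degree_X_sub_C]; simp
    have h2 : (Lagrange.nodal Finset.univ z).degree = (m : WithBot ℕ)  := by
      rw [Lagrange.degree_nodal, hcard]
    have := degree_sub_lt (h1.trans h2.symm) (pow_ne_zero _ (X_sub_C_ne_zero 1))
      (by rw [Monic.leadingCoeff ((monic_X_sub_C (1:ℂ)).pow m),
        Monic.leadingCoeff Lagrange.nodal_monic])
    rwa [h1] at this
  have hdegf : f.degree < ((Finset.univ : Finset (Fin m)).card : WithBot ℕ) := by
    rw [hcard]
    calc f.degree ≤ q.degree := by
          rw [hf]
          refine (degree_mul_le _ _).trans ?_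
          simp [degree_C (a := ((-1:ℂ)^m)) (by simp)]
      _ < _ := hdegq
  have hinterp : Lagrange.interpolate Finset.univ z (fun p => (1 - z p) ^ m) = f := by
    refine (Lagrange.eq_interpolate_of_eval_eq (r := fun p => (1 - z p) ^ m)
      hinj.injOn hdegf fun i _ => ?_).symm
    rw [hf, hq]
    have hnode : (Lagrange.nodal Finset.univ z).eval (z i) = 0 := by
      rw [Lagrange.eval_nodal]
      exact Finset.prod_eq_zero (Finset.mem_univ i) (sub_self _)
    simp only [eval_mul, eval_C, eval_sub, eval_pow, eval_X, eval_one, hnode, sub_zero]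
    rw [← mul_pow]
    ring_nf
  have := congrArg (eval (0 : ℂ)) hinterp
  rw [Lagrange.interpolate_apply, eval_finset_sum] at this
  have hL : ∀ p : Fin m,
      (C ((1 - z p) ^ m) * Lagrange.basis Finset.univ z p).eval 0
        = (1 - z p) ^ m * ∏ j ∈ Finset.univ.erase p, (z j * (z j - z p)⁻¹) := by
    intro p
    rw [eval_mul, eval_C]
    congr 1
    rw [Lagrange.basis, eval_prod]
    refine Finset.prod_congr rfl fun j hj => ?_
    rw [Lagrange.basisDivisor, eval_mul, eval_C, eval_sub, eval_X, eval_C]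
    rw [show z p - z j = -(z j - z p) by ring, show (0 : ℂ) - z j = -(z j) by ring,
      inv_neg, neg_mul_neg, mul_comm]
  rw [Finset.sum_congr rfl (fun p _ => hL p)] at this
  rw [this]
  have hnodal0 : (Lagrange.nodal Finset.univ z).eval 0 = ∏ j, ((0:ℂ) - z j) := by
    rw [Lagrange.eval_nodal]
  have h5 : (∏ j : Fin m, ((0:ℂ) - z j)) = (-1 : ℂ) ^ m * ∏ j, z j := by
    rw [Finset.prod_congr rfl (fun j (_ : j ∈ Finset.univ) => show (0:ℂ) - z j = -1 * z j by ring),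
      Finset.prod_mul_distrib, Finset.prod_const, Finset.card_univ, Fintype.card_fin]
  have h6 : ((-1 : ℂ) ^ m) * ((0:ℂ) - 1) ^ m = 1 := by
    rw [← mul_pow]; norm_num
  have h7 : ((-1 : ℂ) ^ m) * ((-1 : ℂ) ^ m) = 1 := by
    rw [← mul_pow]; norm_num
  rw [hf, hq]
  simp only [eval_mul, eval_C, eval_sub, eval_pow, eval_X, eval_one, hnodal0]
  rw [mul_sub, h6, h5, ← mul_assoc, h7, one_mul]

end helpers

theorem aux : ∀ (m : ℕ) (z : Fin m → ℂ), Function.Injective z →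
    (∀ (σ : Equiv.Perm (Fin m)) (i : Fin m), (∏ j ∈ Finset.Ici i, z (σ j)) ≠ 1) →
    (∑ σ : Equiv.Perm (Fin m), ((Equiv.Perm.sign σ : ℤ) : ℂ) *
      ∏ i : Fin m, z (σ i) ^ (i : ℕ) * (1 - z (σ i)) ^ (m - (i : ℕ)) /
        (1 - ∏ j ∈ Finset.Ici i, z (σ j))) =
    ∏ i : Fin m, ∏ j ∈ Finset.Ioi i, (z j - z i)
  | 0, z, hinj, hden => by
    simp
  | (n+1), z, hinj, hden => by
    classical
    have hZne : (1:ℂ) - ∏ j, z j ≠ 0 := by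
      have h := hden 1 0
      rw [ici_zero] at h
      simp only [Equiv.Perm.coe_one, id_eq] at h
      exact sub_ne_zero.mpr (Ne.symm h)
    have hsum : (∑ σ : Equiv.Perm (Fin (n+1)), ((Equiv.Perm.sign σ : ℤ) : ℂ) *
          ∏ i : Fin (n+1), z (σ i) ^ (i : ℕ) * (1 - z (σ i)) ^ (n+1 - (i : ℕ)) /
            (1 - ∏ j ∈ Finset.Ici i, z (σ j)))
        = ∑ p : Fin (n+1), ∑ e : Equiv.Perm (Fin n),
            ((Equiv.Perm.sign (Equiv.Perm.decomposeFin.symm (p, e)) : ℤ) : ℂ) *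
              ∏ i : Fin (n+1), z (Equiv.Perm.decomposeFin.symm (p, e) i) ^ (i : ℕ) *
                (1 - z (Equiv.Perm.decomposeFin.symm (p, e) i)) ^ (n+1 - (i : ℕ)) /
                (1 - ∏ j ∈ Finset.Ici i, z (Equiv.Perm.decomposeFin.symm (p, e) j)) := by
      exact ((Equiv.sum_comp Equiv.Perm.decomposeFin.symm
        (fun σ : Equiv.Perm (Fin (n+1)) => ((Equiv.Perm.sign σ : ℤ) : ℂ) *
          ∏ i : Fin (n+1), z (σ i) ^ (i : ℕ) * (1 - z (σ i)) ^ (n+1 - (i : ℕ)) /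
            (1 - ∏ j ∈ Finset.Ici i, z (σ j)))).symm).trans (Fintype.sum_prod_type _)
    rw [hsum]
    have hwinj : ∀ p : Fin (n+1), Function.Injective (fun j : Fin n => z (Equiv.swap 0 p j.succ)) := by
      intro p a b hab
      exact Fin.succ_injective n ((Equiv.swap 0 p).injective (hinj hab))
    have hIci : ∀ (p : Fin (n+1)) (e : Equiv.Perm (Fin n)) (i : Fin n),
        (∏ j ∈ Finset.Ici i.succ, z (Equiv.Perm.decomposeFin.symm (p, e) j))
          = ∏ j ∈ Finset.Ici i, z (Equiv.swap 0 p (e j).succ) := by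
      intro p e i
      rw [ici_succ, Finset.prod_map]
      refine Finset.prod_congr rfl fun j _ => ?_
      show z (Equiv.Perm.decomposeFin.symm (p, e) j.succ) = _
      rw [Equiv.Perm.decomposeFin_symm_apply_succ]
    have hdenw : ∀ (p : Fin (n+1)) (e : Equiv.Perm (Fin n)) (i : Fin n),
        (∏ j ∈ Finset.Ici i, z (Equiv.swap 0 p (e j).succ)) ≠ 1 := by
      intro p e i
      rw [← hIci p e i]
      exact hden _ _
    have hIH : ∀ p : Fin (n+1),
        (∑ e : Equiv.Perm (Fin n), ((Equiv.Perm.sign e : ℤ) : ℂ) *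
          ∏ i : Fin n, z (Equiv.swap 0 p (e i).succ) ^ (i : ℕ) *
            (1 - z (Equiv.swap 0 p (e i).succ)) ^ (n - (i : ℕ)) /
            (1 - ∏ j ∈ Finset.Ici i, z (Equiv.swap 0 p (e j).succ)))
        = ∏ i : Fin n, ∏ j ∈ Finset.Ioi i,
            (z (Equiv.swap 0 p j.succ) - z (Equiv.swap 0 p i.succ)) := by
      intro p
      exact aux n (fun j => z (Equiv.swap 0 p j.succ)) (hwinj p) (hdenw p)
    have hterm : ∀ (p : Fin (n+1)) (e : Equiv.Perm (Fin n)),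
        (((Equiv.Perm.sign (Equiv.Perm.decomposeFin.symm (p, e)) : ℤ) : ℂ) *
          ∏ i : Fin (n+1), z (Equiv.Perm.decomposeFin.symm (p, e) i) ^ (i : ℕ) *
            (1 - z (Equiv.Perm.decomposeFin.symm (p, e) i)) ^ (n+1 - (i : ℕ)) /
            (1 - ∏ j ∈ Finset.Ici i, z (Equiv.Perm.decomposeFin.symm (p, e) j)))
        = ((if p = 0 then (1:ℂ) else -1) * ((1 - z p) ^ (n+1) / (1 - ∏ j, z j)) *
            (∏ j : Fin n, z (Equiv.swap 0 p j.succ))) *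
          (((Equiv.Perm.sign e : ℤ) : ℂ) *
            ∏ i : Fin n, z (Equiv.swap 0 p (e i).succ) ^ (i : ℕ) *
              (1 - z (Equiv.swap 0 p (e i).succ)) ^ (n - (i : ℕ)) /
              (1 - ∏ j ∈ Finset.Ici i, z (Equiv.swap 0 p (e j).succ))) := by
      intro p e
      have hsgncast : (((Equiv.Perm.sign (Equiv.Perm.decomposeFin.symm (p, e))) : ℤ) : ℂ)
          = (if p = 0 then (1:ℂ) else -1) * ((Equiv.Perm.sign e : ℤ) : ℂ) := by
        rw [Equiv.Perm.decomposeFin.symm_sign]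
        by_cases hp : p = 0 <;> simp [hp]
      have h0 : z (Equiv.Perm.decomposeFin.symm (p, e) 0) ^ ((0 : Fin (n+1)) : ℕ) *
            (1 - z (Equiv.Perm.decomposeFin.symm (p, e) 0)) ^ (n+1 - ((0 : Fin (n+1)) : ℕ)) /
            (1 - ∏ j ∈ Finset.Ici (0 : Fin (n+1)), z (Equiv.Perm.decomposeFin.symm (p, e) j))
          = (1 - z p) ^ (n+1) / (1 - ∏ j, z j) := by
        have hu : (∏ j ∈ Finset.Ici (0 : Fin (n+1)), z (Equiv.Perm.decomposeFin.symm (p, e) j))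
            = ∏ j, z j := by
          rw [ici_zero]
          exact Equiv.prod_comp (Equiv.Perm.decomposeFin.symm (p, e)) z
        rw [hu, Equiv.Perm.decomposeFin_symm_apply_zero]
        simp
      have hsucc : ∀ i : Fin n,
          z (Equiv.Perm.decomposeFin.symm (p, e) i.succ) ^ ((i.succ : Fin (n+1)) : ℕ) *
            (1 - z (Equiv.Perm.decomposeFin.symm (p, e) i.succ)) ^ (n+1 - ((i.succ : Fin (n+1)) : ℕ)) /
            (1 - ∏ j ∈ Finset.Ici i.succ, z (Equiv.Perm.decomposeFin.symm (p, e) j))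
          = z (Equiv.swap 0 p (e i).succ) *
            (z (Equiv.swap 0 p (e i).succ) ^ (i : ℕ) *
              (1 - z (Equiv.swap 0 p (e i).succ)) ^ (n - (i : ℕ)) /
              (1 - ∏ j ∈ Finset.Ici i, z (Equiv.swap 0 p (e j).succ))) := by
        intro i
        rw [hIci p e i, Equiv.Perm.decomposeFin_symm_apply_succ, Fin.val_succ,
          Nat.add_sub_add_right, pow_succ]
        ring
      rw [hsgncast, Fin.prod_univ_succ, h0, Finset.prod_congr rfl (fun i _ => hsucc i),
        Finset.prod_mul_distrib]
      have hW : (∏ i : Fin n, z (Equiv.swap 0 p (e i).succ))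
          = ∏ j : Fin n, z (Equiv.swap 0 p j.succ) :=
        Equiv.prod_comp e (fun j => z (Equiv.swap 0 p j.succ))
      rw [hW]
      ring
    have hterm2 : ∀ p : Fin (n+1),
        ((if p = 0 then (1:ℂ) else -1) * ((1 - z p) ^ (n+1) / (1 - ∏ j, z j)) *
          (∏ j : Fin n, z (Equiv.swap 0 p j.succ))) *
          (∏ i : Fin n, ∏ j ∈ Finset.Ioi i,
            (z (Equiv.swap 0 p j.succ) - z (Equiv.swap 0 p i.succ)))
        = ((∏ i : Fin (n+1), ∏ j ∈ Finset.Ioi i, (z j - z i)) / (1 - ∏ j, z j)) *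
          ((1 - z p) ^ (n+1) * ∏ j ∈ Finset.univ.erase p, (z j * (z j - z p)⁻¹)) := by
      intro p
      have h2'' : (∏ i : Fin (n+1), ∏ j ∈ Finset.Ioi i,
            (z (Equiv.swap 0 p j) - z (Equiv.swap 0 p i)))
          = (∏ j : Fin n, (z (Equiv.swap 0 p j.succ) - z (Equiv.swap 0 p 0))) *
            ∏ i : Fin n, ∏ j ∈ Finset.Ioi i,
              (z (Equiv.swap 0 p j.succ) - z (Equiv.swap 0 p i.succ)) :=
        pair_split (fun i => z (Equiv.swap 0 p i))
      rw [Equiv.swap_apply_left] at h2''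
      have h1 := vandermonde_perm (Equiv.swap 0 p) z
      rw [h2''] at h1
      have hsw : ((Equiv.Perm.sign (Equiv.swap 0 p) : ℤ) : ℂ) = (if p = 0 then (1:ℂ) else -1) := by
        by_cases hp : p = 0
        · subst hp; simp
        · simp [Equiv.Perm.sign_swap (Ne.symm hp), hp]
      rw [hsw] at h1
      have hDne : (∏ j : Fin n, (z (Equiv.swap 0 p j.succ) - z p)) ≠ 0 := by
        rw [Finset.prod_ne_zero_iff]
        intro j _
        refine sub_ne_zero.mpr fun hzz => ?_
        have h5 := hinj hzz
        have h6 := congrArg (Equiv.swap 0 p) h5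
        rw [Equiv.swap_apply_self, Equiv.swap_apply_right] at h6
        exact Fin.succ_ne_zero j h6
      have hVw : (∏ i : Fin n, ∏ j ∈ Finset.Ioi i,
            (z (Equiv.swap 0 p j.succ) - z (Equiv.swap 0 p i.succ)))
          = (if p = 0 then (1:ℂ) else -1) *
              (∏ i : Fin (n+1), ∏ j ∈ Finset.Ioi i, (z j - z i)) *
              (∏ j : Fin n, (z (Equiv.swap 0 p j.succ) - z p))⁻¹ := by
        rw [eq_mul_inv_iff_mul_eq₀ hDne, mul_comm]
        exact h1
      rw [hVw]
      have hWer : (∏ j : Fin n, z (Equiv.swap 0 p j.succ)) = ∏ j ∈ Finset.univ.erase p, z j :=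
        prod_swap_succ p z
      have hDer : (∏ j : Fin n, (z (Equiv.swap 0 p j.succ) - z p))
          = ∏ j ∈ Finset.univ.erase p, (z j - z p) :=
        prod_swap_succ p (fun x => z x - z p)
      have hEr : (∏ j ∈ Finset.univ.erase p, (z j * (z j - z p)⁻¹))
          = (∏ j ∈ Finset.univ.erase p, z j) * (∏ j ∈ Finset.univ.erase p, (z j - z p))⁻¹ := by
        rw [Finset.prod_mul_distrib, Finset.prod_inv_distrib]
      rw [hEr, ← hWer, ← hDer]
      by_cases hp : p = 0
      · rw [if_pos hp]; ring
      · rw [if_neg hp]; ring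
    have step1 : ∀ p : Fin (n+1),
        (∑ e : Equiv.Perm (Fin n),
          ((Equiv.Perm.sign (Equiv.Perm.decomposeFin.symm (p, e)) : ℤ) : ℂ) *
          ∏ i : Fin (n+1), z (Equiv.Perm.decomposeFin.symm (p, e) i) ^ (i : ℕ) *
            (1 - z (Equiv.Perm.decomposeFin.symm (p, e) i)) ^ (n+1 - (i : ℕ)) /
            (1 - ∏ j ∈ Finset.Ici i, z (Equiv.Perm.decomposeFin.symm (p, e) j)))
        = ((∏ i : Fin (n+1), ∏ j ∈ Finset.Ioi i, (z j - z i)) / (1 - ∏ j, z j)) *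
          ((1 - z p) ^ (n+1) * ∏ j ∈ Finset.univ.erase p, (z j * (z j - z p)⁻¹)) := by
      intro p
      rw [Finset.sum_congr rfl (fun e _ => hterm p e), ← Finset.mul_sum, hIH p]
      exact hterm2 p
    rw [Finset.sum_congr rfl (fun p _ => step1 p), ← Finset.mul_sum,
      lagrange_key (n+1) z hinj, div_mul_cancel₀ _ hZne]


/-- Antisymmetrized sum equals the Vandermonde product. -/
theorem stmt1 (m : ℕ) (hm : 1 ≤ m) (z : Fin m → ℂ)
    (hinj : Function.Injective z)
    (hden : ∀ (σ : Equiv.Perm (Fin m)) (i : Fin m),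
      (∏ j ∈ Finset.Ici i, z (σ j)) ≠ 1) :
    ∑ σ : Equiv.Perm (Fin m), ((Equiv.Perm.sign σ : ℤ) : ℂ) *
      ∏ i : Fin m, z (σ i) ^ (i : ℕ) * (1 - z (σ i)) ^ (m - (i : ℕ)) /
        (1 - ∏ j ∈ Finset.Ici i, z (σ j)) =
    ∏ i : Fin m, ∏ j ∈ Finset.Ioi i, (z j - z i) :=
  aux m z hinj hden
end

section
/- For complex variables u_1,…,u_m (distinct, none equal to 1) and constants w_1,…,{m-1} (denoted z_{π_{n-m+1}},…,z_{π_{n-1}}), the polynomial g(u_1,…,u_m) = ∑_{σ∈S_m} sgn(σ) ∏_{j=1}^m (1-u_{σ_j})^{m-j} ∏_{k=1}^{j-1} (u_{σ_j} - w_k) equals ∏_{j=1}^{m-1}(w_j - 1)^{m-j} · ∏_{1≤i<j≤m}(u_i - u_j). -/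
open scoped BigOperators
open Finset

section Aux

variable (m : ℕ)

/-- indices below `j` -/
def stmt2Fj (j : Fin m) : Finset (Fin (m - 1)) :=
  Finset.univ.filter fun k : Fin (m - 1) => (k : ℕ) < (j : ℕ)

lemma stmt2Fj_card (j : Fin m) : (stmt2Fj m j).card = (j : ℕ) := by
  have hlt : ∀ n ∈ Finset.range (j : ℕ), n < m - 1 := by
    intro n hn
    have := j.isLt
    have := Finset.mem_range.mp hn
    omega
  have : stmt2Fj m j = (Finset.range (j : ℕ)).attachFin hlt := by
    ext k
    simp [stmt2Fj, Finset.mem_attachFin]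
  rw [this, Finset.card_attachFin, Finset.card_range]

variable (u : Fin m → ℂ) (w : Fin (m - 1) → ℂ)

/-- the triangular change-of-basis matrix -/
noncomputable def stmt2T : Matrix (Fin m) (Fin m) ℂ :=
  Matrix.of fun t j =>
    ∑ A ∈ (stmt2Fj m j).powerset.filter (fun A => A.card = (t : ℕ)),
      (-1 : ℂ) ^ ((j : ℕ) - A.card) * ∏ k ∈ A, (1 - w k)

lemma stmt2T_triangular : (stmt2T m w).BlockTriangular id := by
  intro t j h
  simp only [id] at h
  show (∑ A ∈ (stmt2Fj m j).powerset.filter (fun A => A.card = (t : ℕ)),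
      (-1 : ℂ) ^ ((j : ℕ) - A.card) * ∏ k ∈ A, (1 - w k)) = 0
  apply Finset.sum_eq_zero
  intro A hA
  exfalso
  rw [Finset.mem_filter, Finset.mem_powerset] at hA
  have h1 : A.card ≤ (stmt2Fj m j).card := Finset.card_le_card hA.1
  rw [stmt2Fj_card] at h1
  have : (j : ℕ) < (t : ℕ) := h
  omega

lemma stmt2T_diag (j : Fin m) : stmt2T m w j j = ∏ k ∈ stmt2Fj m j, (1 - w k) := by
  unfold stmt2T
  rw [Matrix.of_apply, Finset.sum_eq_single (stmt2Fj m j)]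
  · rw [stmt2Fj_card, Nat.sub_self, pow_zero, one_mul]
  · intro A hA hne
    exfalso
    rw [Finset.mem_filter, Finset.mem_powerset] at hA
    exact hne (Finset.eq_of_subset_of_card_le hA.1 (by rw [hA.2, stmt2Fj_card]))
  · intro h
    exfalso
    apply h
    rw [Finset.mem_filter, Finset.mem_powerset]
    exact ⟨le_refl _, stmt2Fj_card m j⟩

/-- the Vandermonde-type matrix -/
noncomputable def stmt2V : Matrix (Fin m) (Fin m) ℂ :=
  Matrix.of fun i t => (1 - u i) ^ (m - 1 - (t : ℕ))

lemma stmt2_expand (hm : 1 ≤ m) (i j : Fin m) :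
    (1 - u i) ^ (m - 1 - (j : ℕ)) * ∏ k ∈ stmt2Fj m j, (u i - w k) =
      ∑ t : Fin m, stmt2V m u i t * stmt2T m w t j := by
  have hcard : ∀ A ∈ (stmt2Fj m j).powerset, A.card < m := by
    intro A hA
    rw [Finset.mem_powerset] at hA
    have := Finset.card_le_card hA
    rw [stmt2Fj_card] at this
    have := j.isLt
    omega
  set g : Finset (Fin (m - 1)) → Fin m := fun A => ⟨A.card % m, Nat.mod_lt _ hm⟩ with hg
  set hfun : Finset (Fin (m - 1)) → ℂ := fun A =>
    (1 - u i) ^ (m - 1 - A.card) * ((-1 : ℂ) ^ ((j : ℕ) - A.card) * ∏ k ∈ A, (1 - w k)) with hh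
  have hRHS : ∑ t : Fin m, stmt2V m u i t * stmt2T m w t j =
      ∑ A ∈ (stmt2Fj m j).powerset, hfun A := by
    rw [← Finset.sum_fiberwise_of_maps_to (g := g) (t := Finset.univ)
        (fun A _ => Finset.mem_univ _) hfun]
    apply Finset.sum_congr rfl
    intro t _
    unfold stmt2V stmt2T
    rw [Matrix.of_apply, Matrix.of_apply, Finset.mul_sum]
    have hfilt : (stmt2Fj m j).powerset.filter (fun A => A.card = (t : ℕ)) =
        (stmt2Fj m j).powerset.filter (fun A => g A = t) := by
      apply Finset.filter_congr
      intro A hA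
      have hcm := hcard A hA
      constructor
      · intro h; rw [hg]
        exact Fin.ext (by show #A % m = (t : ℕ); rw [h]; exact Nat.mod_eq_of_lt t.isLt)
      · intro h
        have := congrArg Fin.val h
        simpa [hg, Nat.mod_eq_of_lt hcm] using this
    rw [hfilt]
    apply Finset.sum_congr rfl
    intro A hA
    rw [Finset.mem_filter] at hA
    have hAc : A.card = (t : ℕ) := by
      have := congrArg Fin.val hA.2
      simpa [hg, Nat.mod_eq_of_lt (hcard A hA.1)] using this
    rw [hh]
    simp only []
    rw [hAc]
  rw [hRHS]
  have hprod : ∏ k ∈ stmt2Fj m j, (u i - w k) =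
      ∑ A ∈ (stmt2Fj m j).powerset, (∏ k ∈ A, (1 - w k)) * (u i - 1) ^ ((j : ℕ) - A.card) := by
    have hcongr : ∀ k ∈ stmt2Fj m j, u i - w k = (1 - w k) + (u i - 1) := by intros; ring
    rw [Finset.prod_congr rfl hcongr, Finset.prod_add]
    apply Finset.sum_congr rfl
    intro A hA
    rw [Finset.mem_powerset] at hA
    rw [Finset.prod_const, Finset.card_sdiff_of_subset hA, stmt2Fj_card]
  rw [hprod, Finset.mul_sum]
  apply Finset.sum_congr rfl
  intro A hA
  have hAle : A.card ≤ (j : ℕ) := by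
    rw [Finset.mem_powerset] at hA
    have := Finset.card_le_card hA
    rwa [stmt2Fj_card] at this
  have hj : (j : ℕ) ≤ m - 1 := by have := j.isLt; omega
  have h1 : (u i - 1) ^ ((j : ℕ) - A.card) =
      (-1 : ℂ) ^ ((j : ℕ) - A.card) * (1 - u i) ^ ((j : ℕ) - A.card) := by
    rw [← mul_pow]; congr 1; ring
  have h2 : (1 - u i) ^ (m - 1 - (j : ℕ)) * (1 - u i) ^ ((j : ℕ) - A.card) =
      (1 - u i) ^ (m - 1 - A.card) := by
    rw [← pow_add]; congr 1; omega
  rw [hh]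
  simp only []
  rw [h1, ← h2]
  ring

end Aux

section Aux2

variable (m : ℕ) (u : Fin m → ℂ) (w : Fin (m - 1) → ℂ)

lemma stmt2_filterIoi (k : Fin (m - 1)) :
    (Finset.univ.filter fun j : Fin m => (k : ℕ) < (j : ℕ)) =
      Finset.Ioi (Fin.castLE (Nat.sub_le m 1) k) := by
  ext j
  simp [Fin.lt_def]

lemma stmt2T_det : (stmt2T m w).det = ∏ k : Fin (m - 1), (1 - w k) ^ (m - 1 - (k : ℕ)) := by
  rw [Matrix.det_of_upperTriangular (stmt2T_triangular m w)]
  rw [Finset.prod_congr rfl fun j _ => stmt2T_diag m w j]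
  rw [Finset.prod_comm' (s' := fun k : Fin (m - 1) =>
      Finset.univ.filter fun j : Fin m => (k : ℕ) < (j : ℕ)) (t' := Finset.univ)
      (by intro j k; simp [stmt2Fj])]
  apply Finset.prod_congr rfl
  intro k _
  rw [Finset.prod_const, stmt2_filterIoi, Fin.card_Ioi]
  rfl

lemma stmt2_pair_reindex (f : Fin m → Fin m → ℂ) :
    ∏ i : Fin m, ∏ j ∈ Finset.Ioi i, f (Fin.rev j) (Fin.rev i) =
      ∏ i : Fin m, ∏ j ∈ Finset.Ioi i, f i j := by
  rw [Finset.prod_sigma', Finset.prod_sigma']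
  apply Finset.prod_nbij' (fun p => ⟨Fin.rev p.2, Fin.rev p.1⟩)
      (fun p => ⟨Fin.rev p.2, Fin.rev p.1⟩)
  · intro p hp
    simp only [Finset.mem_sigma, Finset.mem_univ, Finset.mem_Ioi, true_and] at hp ⊢
    exact Fin.rev_lt_rev.mpr hp
  · intro p hp
    simp only [Finset.mem_sigma, Finset.mem_univ, Finset.mem_Ioi, true_and] at hp ⊢
    exact Fin.rev_lt_rev.mpr hp
  · intro p hp
    simp [Sigma.ext_iff]
  · intro p hp
    simp [Sigma.ext_iff]
  · intro p hp
    simp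

lemma stmt2V_det :
    (stmt2V m u).det = (-1 : ℂ) ^ (∑ i : Fin m, (m - 1 - (i : ℕ))) *
      ∏ i : Fin m, ∏ j ∈ Finset.Ioi i, (u i - u j) := by
  have h1 : stmt2V m u =
      (Matrix.vandermonde fun i : Fin m => 1 - u (Fin.revPerm i)).submatrix
        Fin.revPerm Fin.revPerm := by
    ext i t
    have hv : ((Fin.rev t : Fin m) : ℕ) = m - 1 - (t : ℕ) := by
      rw [Fin.val_rev]; omega
    simp only [stmt2V, Matrix.of_apply, Matrix.submatrix_apply, Matrix.vandermonde_apply,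
      Fin.revPerm_apply, Fin.rev_rev, hv]
  rw [h1, Matrix.det_submatrix_equiv_self, Matrix.det_vandermonde]
  have h2 : ∀ i : Fin m, ∀ j ∈ Finset.Ioi i,
      (1 - u (Fin.revPerm j)) - (1 - u (Fin.revPerm i)) =
        (fun a b : Fin m => u b - u a) (Fin.rev j) (Fin.rev i) := by
    intro i j _
    show (1 - u (Fin.rev j)) - (1 - u (Fin.rev i)) = u (Fin.rev i) - u (Fin.rev j)
    ring
  rw [Finset.prod_congr rfl fun i _ => Finset.prod_congr rfl (h2 i)]
  rw [stmt2_pair_reindex m (fun a b : Fin m => u b - u a)]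
  have h3 : ∀ i : Fin m, ∏ j ∈ Finset.Ioi i, (u j - u i) =
      (-1 : ℂ) ^ (m - 1 - (i : ℕ)) * ∏ j ∈ Finset.Ioi i, (u i - u j) := by
    intro i
    rw [← Fin.card_Ioi i, ← Finset.prod_const, ← Finset.prod_mul_distrib]
    apply Finset.prod_congr rfl
    intros; ring
  rw [Finset.prod_congr rfl fun i _ => h3 i, Finset.prod_mul_distrib,
    Finset.prod_pow_eq_pow_sum]

end Aux2

open scoped BigOperators

/-- The antisymmetrized polynomial `g` factorizes as a product over the
constants times the Vandermonde product in the `u` variables. -/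
theorem stmt2 (m : ℕ) (hm : 1 ≤ m) (u : Fin m → ℂ) (w : Fin (m - 1) → ℂ)
    (hinj : Function.Injective u) (hu : ∀ i, u i ≠ 1) :
    ∑ σ : Equiv.Perm (Fin m), ((Equiv.Perm.sign σ : ℤ) : ℂ) *
      ∏ j : Fin m, (1 - u (σ j)) ^ (m - 1 - (j : ℕ)) *
        ∏ k ∈ Finset.univ.filter (fun k : Fin (m - 1) => (k : ℕ) < (j : ℕ)),
          (u (σ j) - w k) =
    (∏ k : Fin (m - 1), (w k - 1) ^ (m - 1 - (k : ℕ))) *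
      ∏ i : Fin m, ∏ j ∈ Finset.Ioi i, (u i - u j) := by
  set M : Matrix (Fin m) (Fin m) ℂ := Matrix.of fun i j =>
    (1 - u i) ^ (m - 1 - (j : ℕ)) * ∏ k ∈ stmt2Fj m j, (u i - w k) with hM
  have hLHS : (∑ σ : Equiv.Perm (Fin m), ((Equiv.Perm.sign σ : ℤ) : ℂ) *
      ∏ j : Fin m, (1 - u (σ j)) ^ (m - 1 - (j : ℕ)) *
        ∏ k ∈ Finset.univ.filter (fun k : Fin (m - 1) => (k : ℕ) < (j : ℕ)),
          (u (σ j) - w k)) = M.det := by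
    rw [Matrix.det_apply']
    rfl
  have hMVT : M = stmt2V m u * stmt2T m w := by
    ext i j
    rw [Matrix.mul_apply, hM, Matrix.of_apply]
    exact stmt2_expand m u w hm i j
  rw [hLHS, hMVT, Matrix.det_mul, stmt2V_det, stmt2T_det]
  have hRHS : ∏ k : Fin (m - 1), (w k - 1) ^ (m - 1 - (k : ℕ)) =
      (-1 : ℂ) ^ (∑ k : Fin (m - 1), (m - 1 - (k : ℕ))) *
        ∏ k : Fin (m - 1), (1 - w k) ^ (m - 1 - (k : ℕ)) := by
    rw [← Finset.prod_pow_eq_pow_sum, ← Finset.prod_mul_distrib]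
    apply Finset.prod_congr rfl
    intro k _
    rw [← mul_pow]
    congr 1
    ring
  rw [hRHS]
  have hE : (∑ i : Fin m, (m - 1 - (i : ℕ))) = ∑ k : Fin (m - 1), (m - 1 - (k : ℕ)) := by
    rw [Fin.sum_univ_eq_sum_range (fun i => m - 1 - i) m,
      Fin.sum_univ_eq_sum_range (fun i => m - 1 - i) (m - 1)]
    have hm' : m = (m - 1) + 1 := by omega
    rw [hm', Finset.sum_range_succ]
    simp
  rw [hE]
  ring
end

section
/- At q = 0, the symmetrized Hall–Littlewood-type sum F_λ(u_1,…,u_N) = ∑_{σ∈S_N} ∏_{1≤i<j≤N} (u_{σ_j} - q u_{σ_i})/(u_{σ_j} - u_{σ_i}) ∏_{i=1}^N ((1-u_{σ_i})/(1-q u_{σ_i}))^{λ_i} equals the ratio of determinants: F_λ(u_1,…,u_N; q=0) = det[ u_j^{i-1} (1-u_j)^{λ_i} ]_{1≤i,j≤N} / ∏_{1≤i<j≤N}(u_j - u_i). -/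
open scoped BigOperators

lemma prod_Ioi_right (N : ℕ) (f : Fin N → ℂ) :
    ∏ i : Fin N, ∏ j ∈ Finset.Ioi i, f j = ∏ j : Fin N, f j ^ (j : ℕ) := by
  rw [Finset.prod_comm' (t' := Finset.univ) (s' := fun j => Finset.Iio j)
    (by intro x y; simp [Finset.mem_Ioi, Finset.mem_Iio])]
  refine Finset.prod_congr rfl fun j _ => ?_
  rw [Finset.prod_const, Fin.card_Iio]

lemma perm_vandermonde (N : ℕ) (u : Fin N → ℂ) (σ : Equiv.Perm (Fin N)) :
    ∏ i : Fin N, ∏ j ∈ Finset.Ioi i, (u (σ j) - u (σ i)) =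
      (Equiv.Perm.sign σ : ℤ) * ∏ i : Fin N, ∏ j ∈ Finset.Ioi i, (u j - u i) := by
  have h1 : ∏ i : Fin N, ∏ j ∈ Finset.Ioi i, (u (σ j) - u (σ i)) =
      (Matrix.vandermonde (u ∘ σ)).det := (Matrix.det_vandermonde _).symm
  have h2 : Matrix.vandermonde (u ∘ σ) = (Matrix.vandermonde u).submatrix σ id := by
    ext i j; simp [Matrix.vandermonde, Matrix.submatrix]
  rw [h1, h2, Matrix.det_permute, Matrix.det_vandermonde]

/-- At `q = 0` the Hall–Littlewood-type symmetrization `F_λ` equals a ratio of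
a determinant and the Vandermonde product. -/
theorem stmt4 (N : ℕ) (hN : 1 ≤ N) (lam : Fin N → ℤ) (u : Fin N → ℂ)
    (hinj : Function.Injective u) (hu : ∀ i, u i ≠ 1) :
    ∑ σ : Equiv.Perm (Fin N),
      (∏ i : Fin N, ∏ j ∈ Finset.Ioi i, u (σ j) / (u (σ j) - u (σ i))) *
      ∏ i : Fin N, (1 - u (σ i)) ^ (lam i) =
    Matrix.det (Matrix.of fun i j : Fin N => u j ^ (i : ℕ) * (1 - u j) ^ (lam i)) /
      ∏ i : Fin N, ∏ j ∈ Finset.Ioi i, (u j - u i) := by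
  have hV : (∏ i : Fin N, ∏ j ∈ Finset.Ioi i, (u j - u i)) ≠ 0 := by
    rw [Finset.prod_ne_zero_iff]
    intro i _
    rw [Finset.prod_ne_zero_iff]
    intro j hj
    have hij : i < j := Finset.mem_Ioi.mp hj
    exact sub_ne_zero.mpr fun h => absurd (hinj h) hij.ne'
  rw [eq_div_iff hV, ← Matrix.det_transpose, Matrix.det_apply', Finset.sum_mul]
  refine Finset.sum_congr rfl fun σ _ => ?_
  have hterm : ∏ i : Fin N, ∏ j ∈ Finset.Ioi i, u (σ j) / (u (σ j) - u (σ i)) =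
      (∏ j : Fin N, u (σ j) ^ (j : ℕ)) /
        ((Equiv.Perm.sign σ : ℤ) * ∏ i : Fin N, ∏ j ∈ Finset.Ioi i, (u j - u i)) := by
    rw [← perm_vandermonde]
    rw [← prod_Ioi_right N (fun j => u (σ j))]
    simp only [← Finset.prod_div_distrib]
  rw [hterm]
  simp only [Matrix.transpose_apply, Matrix.of_apply]
  rcases Int.units_eq_one_or (Equiv.Perm.sign σ) with h | h <;>
      rw [h] <;> push_cast <;> rw [Finset.prod_mul_distrib] <;> field_simp
end

section
/- The stochastic L-vertex weights sum to one: for any fixed occupation vector I ∈ (ℤ_{≥0})^n and incoming colour j ∈ {0,1,…,n}, the sum over all outgoing states (K, l) respecting path conservation I + e_j = K + e_l of L_{z,q,s}(I,j;K,l)·(-s)^{1_{l≥1}} equals 1, where the weights L are given by the six-case table: (I,0;I,0) ↦ (1-szq^{|I|})/(1-sz); (I,i;I,i) ↦ (z-sq^{I_i})q^{I_{[i+1,n]}}/(1-sz); (I,0;I−e_i,i) ↦ z(1-q^{I_i})q^{I_{[i+1,n]}}/(1-sz); (I,i;I+e_i,0) ↦ (1-s²q^{|I|})/(1-sz); (I,i;I+e_i−e_j,j)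 (i<j) ↦ z(1-q^{I_j})q^{I_{[j+1,n]}}/(1-sz); (I,j;I+e_j−e_i,i) (i<j) ↦ s(1-q^{I_i})q^{I_{[i+1,n]}}/(1-sz). -/
open scoped BigOperators

/-- `I_{[a,n]} = ∑_{k=a}^{n} I_k`. -/
noncomputable def Ltail (n : ℕ) (I : ℕ → ℕ) (a : ℕ) : ℕ :=
  ∑ k ∈ Finset.Icc a n, I k

/-- The stochastic `L`-vertex weight with incoming states `(I, j)` and outgoing
colour `l` (the outgoing occupation vector is determined by path conservation
as `K = I + e_j - e_l`; the table entries vanish automatically for impossible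
transitions).  Colours range over `0,…,n`, with `0` denoting an empty edge. -/
noncomputable def Lwt (n : ℕ) (z q s : ℂ) (I : ℕ → ℕ) (j l : ℕ) : ℂ :=
  if j = 0 ∧ l = 0 then (1 - s * z * q ^ (Ltail n I 1)) / (1 - s * z)
  else if j = l then (z - s * q ^ (I j)) * q ^ (Ltail n I (j + 1)) / (1 - s * z)
  else if j = 0 then z * (1 - q ^ (I l)) * q ^ (Ltail n I (l + 1)) / (1 - s * z)
  else if l = 0 then (1 - s ^ 2 * q ^ (Ltail n I 1)) / (1 - s * z)
  else if j < l then z * (1 - q ^ (I l)) * q ^ (Ltail n I (l + 1)) / (1 - s * z)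
  else s * (1 - q ^ (I l)) * q ^ (Ltail n I (l + 1)) / (1 - s * z)

lemma Ltail_succ (n : ℕ) (I : ℕ → ℕ) (a : ℕ) (h : a ≤ n) :
    Ltail n I a = I a + Ltail n I (a + 1) := by
  rw [Ltail, Ltail, Finset.Icc_eq_cons_Ioc h, Finset.sum_cons, Finset.Icc_add_one_left_eq_Ioc]

lemma Ltail_top (n : ℕ) (I : ℕ → ℕ) : Ltail n I (n + 1) = 0 := by
  rw [Ltail, Finset.Icc_eq_empty (by omega), Finset.sum_empty]

lemma tele (n : ℕ) (q : ℂ) (I : ℕ → ℕ) :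
    ∀ b, b ≤ n + 1 → ∀ a, a ≤ b →
    ∑ l ∈ Finset.Ico a b, ((1 : ℂ) - q ^ (I l)) * q ^ (Ltail n I (l + 1))
      = q ^ (Ltail n I b) - q ^ (Ltail n I a) := by
  intro b hb
  induction b with
  | zero => intro a ha; interval_cases a; simp
  | succ m ih =>
    intro a ha
    rcases Nat.eq_or_lt_of_le ha with h | h
    · subst h; simp
    · have ham : a ≤ m := by omega
      rw [Finset.sum_Ico_succ_top ham, ih (by omega) a ham,
        Ltail_succ n I m (by omega), pow_add]
      ring

/-- Stochasticity: the `L`-weights, corrected by `(-s)^{1_{l ≥ 1}}`, sum to one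
over all outgoing states respecting path conservation. -/
theorem stmt11 (n : ℕ) (hn : 1 ≤ n) (z q s : ℂ) (hsz : s * z ≠ 1)
    (I : ℕ → ℕ) (j : ℕ) (hj : j ≤ n) :
    ∑ l ∈ Finset.range (n + 1),
      Lwt n z q s I j l * (if 1 ≤ l then -s else 1) = 1 := by
  have hc : (1 : ℂ) - s * z ≠ 0 := sub_ne_zero.mpr (Ne.symm hsz)
  rw [Finset.range_eq_Ico]
  rcases Nat.eq_zero_or_pos j with hj0 | hj1
  · subst hj0
    rw [← Finset.sum_Ico_consecutive _ (Nat.zero_le 1) (by omega : 1 ≤ n + 1)]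
    have h0 : ∑ l ∈ Finset.Ico 0 1, Lwt n z q s I 0 l * (if 1 ≤ l then -s else 1)
        = (1 - s * z * q ^ (Ltail n I 1)) / (1 - s * z) := by
      simp [Lwt]
    have h1 : ∑ l ∈ Finset.Ico 1 (n + 1), Lwt n z q s I 0 l * (if 1 ≤ l then -s else 1)
        = ∑ l ∈ Finset.Ico 1 (n + 1),
            ((1 : ℂ) - q ^ (I l)) * q ^ (Ltail n I (l + 1)) * (z * (-s) / (1 - s * z)) := by
      refine Finset.sum_congr rfl fun l hl => ?_
      rw [Finset.mem_Ico] at hl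
      have hl0 : l ≠ 0 := by omega
      rw [Lwt, if_neg (by simp [hl0]), if_neg (by omega), if_pos rfl, if_pos (by omega)]
      ring
    rw [h0, h1, ← Finset.sum_mul, tele n q I (n + 1) le_rfl 1 (by omega), Ltail_top]
    field_simp
    ring
  · rw [← Finset.sum_Ico_consecutive _ (Nat.zero_le 1) (by omega : 1 ≤ n + 1),
      ← Finset.sum_Ico_consecutive _ (by omega : 1 ≤ j + 1) (by omega : j + 1 ≤ n + 1),
      Finset.sum_Ico_succ_top (by omega : 1 ≤ j)]
    have h0 : ∑ l ∈ Finset.Ico 0 1, Lwt n z q s I j l * (if 1 ≤ l then -s else 1)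
        = (1 - s ^ 2 * q ^ (Ltail n I 1)) / (1 - s * z) := by
      rw [show Finset.Ico 0 1 = {0} from rfl, Finset.sum_singleton, Lwt,
        if_neg (by omega), if_neg (by omega), if_neg (by omega), if_pos rfl,
        if_neg (by omega)]
      simp
    have hjj : Lwt n z q s I j j * (if 1 ≤ j then -s else 1)
        = (z - s * q ^ (I j)) * q ^ (Ltail n I (j + 1)) / (1 - s * z) * (-s) := by
      rw [Lwt, if_neg (by omega), if_pos rfl, if_pos (by omega)]
    have h1 : ∑ l ∈ Finset.Ico 1 j, Lwt n z q s I j l * (if 1 ≤ l then -s else 1)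
        = ∑ l ∈ Finset.Ico 1 j,
            ((1 : ℂ) - q ^ (I l)) * q ^ (Ltail n I (l + 1)) * (s * (-s) / (1 - s * z)) := by
      refine Finset.sum_congr rfl fun l hl => ?_
      rw [Finset.mem_Ico] at hl
      rw [Lwt, if_neg (by omega), if_neg (by omega), if_neg (by omega), if_neg (by omega),
        if_neg (by omega), if_pos (by omega)]
      ring
    have h2 : ∑ l ∈ Finset.Ico (j + 1) (n + 1), Lwt n z q s I j l * (if 1 ≤ l then -s else 1)
        = ∑ l ∈ Finset.Ico (j + 1) (n + 1),
            ((1 : ℂ) - q ^ (I l)) * q ^ (Ltail n I (l + 1)) * (z * (-s) / (1 - s * z)) := by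
      refine Finset.sum_congr rfl fun l hl => ?_
      rw [Finset.mem_Ico] at hl
      rw [Lwt, if_neg (by omega), if_neg (by omega), if_neg (by omega), if_neg (by omega),
        if_pos (by omega), if_pos (by omega)]
      ring
    rw [h0, hjj, h1, h2, ← Finset.sum_mul, ← Finset.sum_mul,
      tele n q I j (by omega) 1 (by omega),
      tele n q I (n + 1) le_rfl (j + 1) (by omega), Ltail_top,
      Ltail_succ n I j hj, pow_add]
    field_simp
    ring
end

section
/- For the two-particle 2-TASEP boundary condition check: the function P(ν, p) = ∑_{π∈S_n} sgn(π) ∏_{i=1}^n ((1-z_i)/(1-z_{π_i}))^i z_{π_i}^{ν_i} ∏_{i=1}^m ∏_{j=1}^{p_i} 1/(1-z_{π_j}) · ∑_{σ∈S_m} sgn(σ) ∏_{i=1}^m ((1-u_i)/(1-u_{σ_i}))^i ∏_{j=1}^{p_i-1}(u_{σ_i}-z_{π_j}) vanishes under the boundary specialization ν_{l+1} = ν_l whenever l ∈ p and l+1 ∉ p (type-2 particle immediately left of type-1 at the same site). -/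
open scoped BigOperators

/-- Boundary condition (1) for the nested Bethe ansatz eigenfunction of the
2-TASEP: if site index `l` carries a type-2 particle (`l ∈ p`) and `l+1` does
not (`l+1 ∉ p`), then the eigenfunction `P(ν, p)` vanishes under the
specialization `ν_{l+1} = ν_l`. -/
theorem stmt17 (n m : ℕ) (hmn : m ≤ n) (z : Fin n → ℂ) (u : Fin m → ℂ)
    (hzinj : Function.Injective z) (hz1 : ∀ i, z i ≠ 1) (hu1 : ∀ i, u i ≠ 1)
    (p : Fin m → Fin n) (hp : StrictMono p)
    (ν : Fin n → ℤ) (l : Fin n) (hl : (l : ℕ) + 1 < n)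
    (hin : ∃ i, p i = l) (hout : ∀ i, (p i : ℕ) ≠ (l : ℕ) + 1)
    (hν : ν ⟨(l : ℕ) + 1, hl⟩ = ν l) :
    (∑ π : Equiv.Perm (Fin n), ((Equiv.Perm.sign π : ℤ) : ℂ) *
      (∏ i : Fin n, ((1 - z i) / (1 - z (π i))) ^ ((i : ℕ) + 1) *
        z (π i) ^ (ν i)) *
      (∏ i : Fin m, ∏ j ∈ Finset.Iic (p i), (1 - z (π j))⁻¹) *
      ∑ σ : Equiv.Perm (Fin m), ((Equiv.Perm.sign σ : ℤ) : ℂ) *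
        (∏ i : Fin m, ((1 - u i) / (1 - u (σ i))) ^ ((i : ℕ) + 1)) *
        ∏ i : Fin m, ∏ j ∈ Finset.Iio (p i), (u (σ i) - z (π j))) = 0 := by
  classical
  set l' : Fin n := ⟨(l : ℕ) + 1, hl⟩ with hl'def
  have hne : l ≠ l' := by
    intro h
    have := congrArg (Fin.val) h
    simp [hl'def] at this
  set s : Equiv.Perm (Fin n) := Equiv.swap l l' with hsdef
  -- counting function
  set c : Fin n → ℕ := fun j => (Finset.univ.filter (fun i => j ≤ p i)).card with hcdef
  obtain ⟨i₀, hi₀⟩ := hin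
  have hc : c l = c l' + 1 := by
    have hset : Finset.univ.filter (fun i => l ≤ p i)
        = insert i₀ (Finset.univ.filter (fun i => l' ≤ p i)) := by
      ext i
      simp only [Finset.mem_filter, Finset.mem_insert, Finset.mem_univ, true_and]
      constructor
      · intro h
        rcases eq_or_lt_of_le h with h | h
        · left; exact hp.injective (by rw [hi₀, ← h])
        · right
          rw [Fin.le_def]
          rw [Fin.lt_def] at h
          simp only [hl'def]
          omega
      · rintro (rfl | h)
        · rw [hi₀]
        · refine le_trans ?_ h
          rw [Fin.le_def]
          simp [hl'def]
      
    have hnotmem : i₀ ∉ Finset.univ.filter (fun i => l' ≤ p i) := by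
      simp only [Finset.mem_filter, Finset.mem_univ, true_and, hi₀]
      rw [Fin.le_def]
      simp [hl'def]
    simp only [hcdef]
    rw [hset, Finset.card_insert_of_notMem hnotmem]
  -- s preserves Iio (p i)
  have hmaps : ∀ (i : Fin m) (k : Fin n), k ∈ Finset.Iio (p i) → s k ∈ Finset.Iio (p i) := by
    intro i k hk
    rw [Finset.mem_Iio] at hk ⊢
    rcases eq_or_ne k l with rfl | hkl
    · rw [hsdef, Equiv.swap_apply_left]
      rw [Fin.lt_def] at hk ⊢
      have := hout i
      simp only [hl'def]
      omega
    · rcases eq_or_ne k l' with rfl | hkl'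
      · rw [hsdef, Equiv.swap_apply_right]
        rw [Fin.lt_def] at hk ⊢
        simp only [hl'def] at hk
        omega
      · rwa [hsdef, Equiv.swap_apply_of_ne_of_ne hkl hkl']
  have hprodIio : ∀ (i : Fin m) (g : Fin n → ℂ),
      ∏ j ∈ Finset.Iio (p i), g (s j) = ∏ j ∈ Finset.Iio (p i), g j := by
    intro i g
    refine Finset.prod_nbij' (fun j => s j) (fun j => s j)
      (hmaps i) (hmaps i) ?_ ?_ ?_
    · intro j _; simp [hsdef]
    · intro j _; simp [hsdef]
    · intro j _; rfl
  -- invariance of exponents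
  have hinv : ∀ j : Fin n, ((s j : ℕ) + 1 + c (s j) = (j : ℕ) + 1 + c j) ∧ ν (s j) = ν j := by
    intro j
    rcases eq_or_ne j l with rfl | hjl
    · rw [hsdef, Equiv.swap_apply_left]
      have hval : (l' : ℕ) = (j : ℕ) + 1 := rfl
      exact ⟨by omega, hν⟩
    · rcases eq_or_ne j l' with rfl | hjl'
      · rw [hsdef, Equiv.swap_apply_right]
        have hval : (l' : ℕ) = (l : ℕ) + 1 := rfl
        exact ⟨by omega, hν.symm⟩
      · rw [hsdef, Equiv.swap_apply_of_ne_of_ne hjl hjl']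
        exact ⟨rfl, rfl⟩
  have hss : ∀ j, s (s j) = j := by
    intro j; rw [hsdef]; exact Equiv.swap_apply_self _ _ _
  -- rewrite the B factor as a product over Fin n with multiplicities
  have hB : ∀ τ : Equiv.Perm (Fin n),
      (∏ i : Fin m, ∏ j ∈ Finset.Iic (p i), (1 - z (τ j))⁻¹)
      = ∏ j : Fin n, ((1 - z (τ j))⁻¹) ^ (c j) := by
    intro τ
    have h1 : ∀ i : Fin m, ∏ j ∈ Finset.Iic (p i), (1 - z (τ j))⁻¹
        = ∏ j : Fin n, if j ≤ p i then (1 - z (τ j))⁻¹ else 1 := by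
      intro i
      rw [← Finset.prod_filter]
      refine Finset.prod_congr ?_ fun _ _ => rfl
      ext j; simp
    simp_rw [h1]
    rw [Finset.prod_comm]
    refine Finset.prod_congr rfl fun j _ => ?_
    rw [Finset.prod_ite, Finset.prod_const, Finset.prod_const_one, mul_one]
  have hAB : ∀ τ : Equiv.Perm (Fin n),
      (∏ i : Fin n, ((1 - z i) / (1 - z (τ i))) ^ ((i : ℕ) + 1) * z (τ i) ^ (ν i)) *
      (∏ i : Fin m, ∏ j ∈ Finset.Iic (p i), (1 - z (τ j))⁻¹)
      = (∏ i : Fin n, (1 - z i) ^ ((i : ℕ) + 1)) *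
        ∏ j : Fin n, (((1 - z (τ j))⁻¹) ^ ((j : ℕ) + 1 + c j) * z (τ j) ^ (ν j)) := by
    intro τ
    rw [hB τ, ← Finset.prod_mul_distrib, ← Finset.prod_mul_distrib]
    refine Finset.prod_congr rfl fun j _ => ?_
    rw [div_eq_mul_inv, mul_pow, pow_add]
    ring
  have hABswap : ∀ π : Equiv.Perm (Fin n),
      (∏ i : Fin n, ((1 - z i) / (1 - z ((π * s) i))) ^ ((i : ℕ) + 1) * z ((π * s) i) ^ (ν i)) *
      (∏ i : Fin m, ∏ j ∈ Finset.Iic (p i), (1 - z ((π * s) j))⁻¹)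
      = (∏ i : Fin n, ((1 - z i) / (1 - z (π i))) ^ ((i : ℕ) + 1) * z (π i) ^ (ν i)) *
      (∏ i : Fin m, ∏ j ∈ Finset.Iic (p i), (1 - z (π j))⁻¹) := by
    intro π
    rw [hAB, hAB]
    congr 1
    have e1 : ∀ j : Fin n, (π * s) j = π (s j) := fun j => Equiv.Perm.mul_apply π s j
    calc (∏ j : Fin n, ((1 - z ((π * s) j))⁻¹) ^ ((j : ℕ) + 1 + c j) * z ((π * s) j) ^ (ν j))
        = ∏ j : Fin n, ((1 - z (π (s j)))⁻¹) ^ (((s (s j)) : ℕ) + 1 + c (s (s j)))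
            * z (π (s j)) ^ (ν (s (s j))) := by
          refine Finset.prod_congr rfl fun j _ => ?_
          rw [e1 j, hss j]
      _ = ∏ j : Fin n, ((1 - z (π j))⁻¹) ^ (((s j) : ℕ) + 1 + c (s j)) * z (π j) ^ (ν (s j)) :=
          Equiv.prod_comp s
            (fun k => ((1 - z (π k))⁻¹) ^ (((s k) : ℕ) + 1 + c (s k)) * z (π k) ^ (ν (s k)))
      _ = ∏ j : Fin n, ((1 - z (π j))⁻¹) ^ ((j : ℕ) + 1 + c j) * z (π j) ^ (ν j) := by
          refine Finset.prod_congr rfl fun j _ => ?_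
          rw [(hinv j).1, (hinv j).2]
  have hCswap : ∀ (π : Equiv.Perm (Fin n)),
      (∑ σ : Equiv.Perm (Fin m), ((Equiv.Perm.sign σ : ℤ) : ℂ) *
        (∏ i : Fin m, ((1 - u i) / (1 - u (σ i))) ^ ((i : ℕ) + 1)) *
        ∏ i : Fin m, ∏ j ∈ Finset.Iio (p i), (u (σ i) - z ((π * s) j)))
      = ∑ σ : Equiv.Perm (Fin m), ((Equiv.Perm.sign σ : ℤ) : ℂ) *
        (∏ i : Fin m, ((1 - u i) / (1 - u (σ i))) ^ ((i : ℕ) + 1)) *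
        ∏ i : Fin m, ∏ j ∈ Finset.Iio (p i), (u (σ i) - z (π j)) := by
    intro π
    refine Finset.sum_congr rfl fun σ _ => ?_
    congr 1
    refine Finset.prod_congr rfl fun i _ => ?_
    have e1 : ∀ j : Fin n, (π * s) j = π (s j) := fun j => Equiv.Perm.mul_apply π s j
    calc (∏ j ∈ Finset.Iio (p i), (u (σ i) - z ((π * s) j)))
        = ∏ j ∈ Finset.Iio (p i), (u (σ i) - z (π (s j))) :=
          Finset.prod_congr rfl fun j _ => by rw [e1 j]
      _ = ∏ j ∈ Finset.Iio (p i), (u (σ i) - z (π j)) :=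
          hprodIio i (fun k => u (σ i) - z (π k))
  have hsign : ∀ π : Equiv.Perm (Fin n),
      ((Equiv.Perm.sign (π * s) : ℤ) : ℂ) = - ((Equiv.Perm.sign π : ℤ) : ℂ) := by
    intro π
    have : Equiv.Perm.sign (π * s) = - Equiv.Perm.sign π := by
      rw [Equiv.Perm.sign_mul, hsdef, Equiv.Perm.sign_swap hne, mul_neg_one]
    rw [this]
    push_cast
    ring
  -- the summand
  set G : Equiv.Perm (Fin n) → ℂ := fun π => ((Equiv.Perm.sign π : ℤ) : ℂ) *
      (∏ i : Fin n, ((1 - z i) / (1 - z (π i))) ^ ((i : ℕ) + 1) *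
        z (π i) ^ (ν i)) *
      (∏ i : Fin m, ∏ j ∈ Finset.Iic (p i), (1 - z (π j))⁻¹) *
      ∑ σ : Equiv.Perm (Fin m), ((Equiv.Perm.sign σ : ℤ) : ℂ) *
        (∏ i : Fin m, ((1 - u i) / (1 - u (σ i))) ^ ((i : ℕ) + 1)) *
        ∏ i : Fin m, ∏ j ∈ Finset.Iio (p i), (u (σ i) - z (π j)) with hG
  show ∑ π : Equiv.Perm (Fin n), G π = 0
  have key : ∀ π : Equiv.Perm (Fin n), G (π * s) = - G π := by
    intro π
    rw [hG]
    simp only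
    rw [hsign π, hCswap π, neg_mul, neg_mul, neg_mul, neg_inj]
    congr 1
    rw [mul_assoc, mul_assoc, hABswap π]
  have h1 : ∑ π : Equiv.Perm (Fin n), G (π * s) = ∑ π : Equiv.Perm (Fin n), G π := by
    simpa using Equiv.sum_comp (Equiv.mulRight s) G
  have h2 : ∑ π : Equiv.Perm (Fin n), G π = - ∑ π : Equiv.Perm (Fin n), G π := by
    conv_lhs => rw [← h1]
    rw [← Finset.sum_neg_distrib]
    exact Finset.sum_congr rfl fun π _ => key π
  linear_combination h2 / 2
end
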